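/- arXiv:2303.01552 — 2 statements merged into one kernel-verified Lean document; each statement's English description precedes it below -/
import Mathlib

section
/- Let F̂_n be the empirical CDF of n i.i.d. samples from a CDF F with density f satisfying f(t) ≤ f_max for |t − τ*| ≤ D. Then there exists a universal constant C > 0 such that for all 0 < δ ≤ D and n ≥ 5: E[ sup over |t − τ*| ≤ δ of |(F̂_n(t) − F(t)) − (F̂_n(τ*) − F(τ*))| ] ≤ C( √(δ·f_max·log n / n) + log n / n ). -/
open MeasureTheory ProbabilityTheory
open scoped ENNReal

noncomputable def empCDF {Ω : Type*} (Y : ℕ → Ω → ℝ) (n : ℕ) (ω : Ω) (t : ℝ) : ℝ :=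
  (({i : ℕ | i < n ∧ Y i ω ≤ t} : Set ℕ).ncard : ℝ) / n

namespace Stmt16Aux

variable {Ω : Type*}

lemma empCDF_eq_sum (Y : ℕ → Ω → ℝ) (n : ℕ) (ω : Ω) (t : ℝ) :
    empCDF Y n ω t = (∑ i ∈ Finset.range n, if Y i ω ≤ t then (1:ℝ) else 0) / n := by
  classical
  unfold empCDF
  congr 1
  have h : {i : ℕ | i < n ∧ Y i ω ≤ t}
      = ((Finset.range n).filter (fun i => Y i ω ≤ t) : Finset ℕ) := by
    ext i; simp [Finset.mem_filter]
  rw [h, Set.ncard_coe_finset, Finset.sum_boole]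

lemma empCDF_mono (Y : ℕ → Ω → ℝ) (n : ℕ) (ω : Ω) : Monotone (empCDF Y n ω) := by
  intro s t hst
  rw [empCDF_eq_sum, empCDF_eq_sum]
  rcases Nat.eq_zero_or_pos n with h | h
  · simp [h]
  · rw [div_le_div_iff_of_pos_right (by exact_mod_cast h : (0:ℝ) < n)]
    apply Finset.sum_le_sum; intro i _
    by_cases hy : Y i ω ≤ s
    · simp [hy, hy.trans hst]
    · simp only [if_neg hy]
      split <;> norm_num


lemma empCDF_nonneg (Y : ℕ → Ω → ℝ) (n : ℕ) (ω : Ω) (t : ℝ) : 0 ≤ empCDF Y n ω t := by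
  unfold empCDF; positivity

lemma empCDF_le_one (Y : ℕ → Ω → ℝ) (n : ℕ) (ω : Ω) (t : ℝ) : empCDF Y n ω t ≤ 1 := by
  rcases Nat.eq_zero_or_pos n with h | h
  · simp [empCDF, h]
  rw [empCDF_eq_sum, div_le_one (by exact_mod_cast h)]
  calc (∑ i ∈ Finset.range n, if Y i ω ≤ t then (1:ℝ) else 0)
      ≤ ∑ i ∈ Finset.range n, 1 := by
        apply Finset.sum_le_sum; intro i _; split <;> norm_num
    _ = n := by simp

lemma empCDF_sub (Y : ℕ → Ω → ℝ) (n : ℕ) (ω : Ω) {a b : ℝ} (hab : a ≤ b) :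
    empCDF Y n ω b - empCDF Y n ω a
      = (∑ i ∈ Finset.range n, if a < Y i ω ∧ Y i ω ≤ b then (1:ℝ) else 0) / n := by
  rw [empCDF_eq_sum, empCDF_eq_sum, div_sub_div_same, ← Finset.sum_sub_distrib]
  congr 1; apply Finset.sum_congr rfl; intro i _
  by_cases h1 : Y i ω ≤ a
  · have h2 : Y i ω ≤ b := h1.trans hab
    simp [h1, h2, not_lt.mpr h1]
  · by_cases h2 : Y i ω ≤ b <;> simp [h1, h2, not_le.mp h1]

lemma measurable_empCDF [MeasurableSpace Ω] {Y : ℕ → Ω → ℝ} (hY : ∀ i, Measurable (Y i))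
    (n : ℕ) (t : ℝ) : Measurable fun ω => empCDF Y n ω t := by
  have : (fun ω => empCDF Y n ω t)
      = fun ω => (∑ i ∈ Finset.range n, if Y i ω ≤ t then (1:ℝ) else 0) / n := by
    funext ω; exact empCDF_eq_sum Y n ω t
  rw [this]
  apply Measurable.div_const
  apply Finset.measurable_sum
  intro i _
  exact Measurable.ite ((hY i) measurableSet_Iic) measurable_const measurable_const

lemma exp_psi_le_sq {s : ℝ} (hs : |s| ≤ 1) : Real.exp s - 1 - s ≤ s ^ 2 := by
  have h := Real.exp_bound hs (n := 2) (by norm_num)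
  have h2 : (∑ m ∈ Finset.range 2, s ^ m / m.factorial) = 1 + s := by
    simp [Finset.sum_range_succ]
  rw [h2] at h
  have h3 : |s| ^ 2 = s ^ 2 := sq_abs s
  have h4 : Real.exp s - (1 + s) ≤ |s| ^ 2 * (Nat.succ 2 / (Nat.factorial 2 * 2)) :=
    (abs_le.mp h).2
  rw [h3] at h4
  norm_num [Nat.factorial] at h4
  nlinarith [sq_nonneg s]

lemma mgf_indicator_le [MeasurableSpace Ω] {μ : Measure Ω} [IsProbabilityMeasure μ]
    {A : Set Ω} (hA : MeasurableSet A) (s : ℝ) :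
    mgf (A.indicator (fun _ => (1:ℝ))) μ s ≤ Real.exp ((μ A).toReal * (Real.exp s - 1)) := by
  have h1 : ∀ ω, Real.exp (s * A.indicator (fun _ => (1:ℝ)) ω)
      = 1 + (Real.exp s - 1) * A.indicator (fun _ => (1:ℝ)) ω := by
    intro ω; by_cases h : ω ∈ A <;> simp [h]
  have hind : Integrable (A.indicator (fun _ => (1:ℝ))) μ :=
    (integrable_const (1:ℝ)).indicator hA
  have h2 : mgf (A.indicator (fun _ => (1:ℝ))) μ s = 1 + (Real.exp s - 1) * (μ A).toReal := by
    rw [mgf]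
    calc ∫ ω, Real.exp (s * A.indicator (fun _ => (1:ℝ)) ω) ∂μ
        = ∫ ω, (1 + (Real.exp s - 1) * A.indicator (fun _ => (1:ℝ)) ω) ∂μ := by
          apply integral_congr_ae; filter_upwards with ω; exact h1 ω
      _ = 1 + (Real.exp s - 1) * (μ A).toReal := by
          rw [integral_add (integrable_const 1) (hind.const_mul _), integral_const,
            integral_const_mul]
          have : ∫ ω, A.indicator (fun _ => (1:ℝ)) ω ∂μ = (μ A).toReal := by
            have h' := integral_indicator_one (μ := μ) hA; rw [measureReal_def] at h'; exact h'
          rw [this]; simp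
  rw [h2]
  have := Real.add_one_le_exp ((μ A).toReal * (Real.exp s - 1))
  nlinarith [this]


lemma integral_exp_dev_le [MeasurableSpace Ω] {μ : Measure Ω} [IsProbabilityMeasure μ]
    {Y : ℕ → Ω → ℝ} (hYmeas : ∀ i, Measurable (Y i))
    (hiid : iIndepFun (m := fun _ : ℕ => (inferInstance : MeasurableSpace ℝ)) Y μ)
    (n : ℕ) (a b : ℝ) (p : ℝ)
    (hp : ∀ i, (μ (Y i ⁻¹' Set.Ioc a b)).toReal = p)
    {s : ℝ} (hs : |s| ≤ 1) :
    ∫ ω, Real.exp (s * ((∑ i ∈ Finset.range n,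
        (Set.Ioc a b).indicator (fun _ => (1:ℝ)) (Y i ω)) - n * p)) ∂μ
      ≤ Real.exp ((n:ℝ) * p * s ^ 2) := by
  classical
  set X : ℕ → Ω → ℝ := fun i => ((Set.Ioc a b).indicator (fun _ => (1:ℝ))) ∘ Y i with hX
  have hXm : ∀ i, Measurable (X i) := fun i =>
    (measurable_const.indicator measurableSet_Ioc).comp (hYmeas i)
  have hXind : iIndepFun (m := fun _ : ℕ => (inferInstance : MeasurableSpace ℝ)) X μ :=
    hiid.comp _ (fun _ => measurable_const.indicator measurableSet_Ioc)
  have hp0 : 0 ≤ p := (hp 0) ▸ ENNReal.toReal_nonneg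
  have hXeq : ∀ i, X i = (Y i ⁻¹' Set.Ioc a b).indicator (fun _ => (1:ℝ)) := by
    intro i; funext ω
    by_cases h : Y i ω ∈ Set.Ioc a b <;>
      simp [hX, Set.indicator_of_mem, Set.indicator_of_notMem, h]
  have hmgf_one : ∀ i, mgf (X i) μ s ≤ Real.exp (p * (Real.exp s - 1)) := by
    intro i
    rw [hXeq i]
    have := mgf_indicator_le (μ := μ) ((hYmeas i) (measurableSet_Ioc (a := a) (b := b))) s
    rwa [hp i] at this
  have hmgf_sum : mgf (∑ i ∈ Finset.range n, X i) μ s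
      ≤ Real.exp ((n:ℝ) * p * (Real.exp s - 1)) := by
    rw [hXind.mgf_sum hXm]
    calc ∏ i ∈ Finset.range n, mgf (X i) μ s
        ≤ ∏ _i ∈ Finset.range n, Real.exp (p * (Real.exp s - 1)) :=
          Finset.prod_le_prod (fun i _ => mgf_nonneg) (fun i _ => hmgf_one i)
      _ = Real.exp ((n:ℝ) * p * (Real.exp s - 1)) := by
          rw [Finset.prod_const, ← Real.exp_nat_mul, Finset.card_range]
          ring_nf
  have key : ∫ ω, Real.exp (s * ((∑ i ∈ Finset.range n,
        (Set.Ioc a b).indicator (fun _ => (1:ℝ)) (Y i ω)) - n * p)) ∂μ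
      = Real.exp (-(s * (n * p))) * mgf (∑ i ∈ Finset.range n, X i) μ s := by
    rw [mgf, ← integral_const_mul]
    apply integral_congr_ae; filter_upwards with ω
    rw [← Real.exp_add, Finset.sum_apply]
    congr 1
    simp only [hX, Function.comp_apply]
    ring
  rw [key]
  have h1 : Real.exp (-(s * (n * p))) * mgf (∑ i ∈ Finset.range n, X i) μ s
      ≤ Real.exp (-(s * (n * p))) * Real.exp ((n:ℝ) * p * (Real.exp s - 1)) :=
    mul_le_mul_of_nonneg_left hmgf_sum (Real.exp_nonneg _)
  refine h1.trans ?_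
  rw [← Real.exp_add]
  apply Real.exp_le_exp.mpr
  have h2 : Real.exp s - 1 - s ≤ s ^ 2 := exp_psi_le_sq hs
  have hnp : 0 ≤ (n:ℝ) * p := by positivity
  nlinarith


lemma integral_sup_abs_le [MeasurableSpace Ω] {μ : Measure Ω} [IsProbabilityMeasure μ]
    (m : ℕ) (V : ℕ → Ω → ℝ) (hVmeas : ∀ k, Measurable (V k))
    {B : ℝ} (hB : 0 ≤ B) (hVbd : ∀ k ω, |V k ω| ≤ B)
    {lam K : ℝ} (hlam : 0 < lam) (hK : 0 ≤ K)
    (hmgf : ∀ k ≤ m, ∀ s : ℝ, |s| = lam → ∫ ω, Real.exp (s * V k ω) ∂μ ≤ Real.exp K) :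
    ∫ ω, (Finset.range (m+1)).sup'
        (Finset.nonempty_range_iff.mpr (Nat.succ_ne_zero m)) (fun k => |V k ω|) ∂μ
      ≤ (Real.log (2*(m+1)) + K) / lam := by
  classical
  have ne : (Finset.range (m+1)).Nonempty := Finset.nonempty_range_iff.mpr (Nat.succ_ne_zero m)
  set N : Ω → ℝ := fun ω => (Finset.range (m+1)).sup' ne (fun k => |V k ω|) with hN
  have hNm : Measurable N := by
    have : Measurable ((Finset.range (m+1)).sup' ne (fun k => fun ω => |V k ω|)) :=
      Finset.measurable_sup' ne (fun k _ => (hVmeas k).abs)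
    have he : N = (Finset.range (m+1)).sup' ne (fun k => fun ω => |V k ω|) := by
      funext ω; rw [hN, Finset.sup'_apply]
    rw [he]; exact this
  have hN0 : ∀ ω, 0 ≤ N ω := fun ω =>
    le_trans (abs_nonneg (V 0 ω))
      (Finset.le_sup' (fun k => |V k ω|) (Finset.mem_range.mpr (Nat.succ_pos m)))
  have hNB : ∀ ω, N ω ≤ B := fun ω => Finset.sup'_le _ _ (fun k _ => hVbd k ω)
  have hNint : Integrable N μ := by
    refine Integrable.mono' (integrable_const B) hNm.aestronglyMeasurable ?_
    filter_upwards with ω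
    rw [Real.norm_eq_abs, abs_of_nonneg (hN0 ω)]; exact hNB ω
  -- integrability of the exponential terms
  have hint_exp : ∀ (s : ℝ), |s| = lam → ∀ k,
      Integrable (fun ω => Real.exp (s * V k ω)) μ := by
    intro s hsl k
    refine Integrable.mono' (integrable_const (Real.exp (lam * B)))
      (((hVmeas k).const_mul s).exp.aestronglyMeasurable) ?_
    filter_upwards with ω
    rw [Real.norm_eq_abs, abs_of_nonneg (Real.exp_nonneg _)]
    apply Real.exp_le_exp.mpr
    calc s * V k ω ≤ |s * V k ω| := le_abs_self _
      _ = lam * |V k ω| := by rw [abs_mul, hsl]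
      _ ≤ lam * B := by exact mul_le_mul_of_nonneg_left (hVbd k ω) hlam.le
  -- pointwise bound for exp (lam * N)
  have hpt : ∀ ω, Real.exp (lam * N ω) ≤ ∑ k ∈ Finset.range (m+1),
      (Real.exp (lam * V k ω) + Real.exp (-lam * V k ω)) := by
    intro ω
    obtain ⟨k0, hk0, hk0eq⟩ := Finset.exists_mem_eq_sup' ne (fun k => |V k ω|)
    have hNω : N ω = |V k0 ω| := hk0eq
    have h1 : Real.exp (lam * N ω)
        ≤ Real.exp (lam * V k0 ω) + Real.exp (-lam * V k0 ω) := by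
      rcases abs_cases (V k0 ω) with ⟨h, _⟩ | ⟨h, _⟩
      · rw [hNω, h]
        nlinarith [Real.exp_nonneg (-lam * V k0 ω)]
      · rw [hNω, h]
        have he : lam * -V k0 ω = -lam * V k0 ω := by ring
        rw [he]
        nlinarith [Real.exp_nonneg (lam * V k0 ω)]
    refine h1.trans (Finset.single_le_sum (f := fun k =>
      Real.exp (lam * V k ω) + Real.exp (-lam * V k ω)) ?_ hk0)
    intro k _
    positivity
  -- Jensen
  have hjensen : Real.exp (lam * ∫ ω, N ω ∂μ) ≤ ∫ ω, Real.exp (lam * N ω) ∂μ := by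
    have h1 : Real.exp (∫ ω, lam * N ω ∂μ) ≤ ∫ ω, Real.exp (lam * N ω) ∂μ := by
      refine (convexOn_exp.map_integral_le Real.continuous_exp.continuousOn
        isClosed_univ ?_ (hNint.const_mul lam) ?_)
      · filter_upwards with ω; trivial
      · refine Integrable.mono' (integrable_const (Real.exp (lam * B)))
          ((hNm.const_mul lam).exp.aestronglyMeasurable) ?_
        filter_upwards with ω
        simp only [Function.comp_apply]
        rw [Real.norm_eq_abs, abs_of_nonneg (Real.exp_nonneg _)]
        exact Real.exp_le_exp.mpr (mul_le_mul_of_nonneg_left (hNB ω) hlam.le)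
    rwa [integral_const_mul] at h1
  -- bound the integral of the exponential
  have hsum : ∫ ω, Real.exp (lam * N ω) ∂μ ≤ 2 * (m+1) * Real.exp K := by
    have h2 : ∫ ω, Real.exp (lam * N ω) ∂μ
        ≤ ∫ ω, (∑ k ∈ Finset.range (m+1),
          (Real.exp (lam * V k ω) + Real.exp (-lam * V k ω))) ∂μ := by
      refine integral_mono_of_nonneg ?_ ?_ ?_
      · filter_upwards with ω; positivity
      · exact integrable_finset_sum _ (fun k _ =>
          (hint_exp lam (abs_of_pos hlam) k).add
            (hint_exp (-lam) (by rw [abs_neg, abs_of_pos hlam]) k))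
      · filter_upwards with ω; exact hpt ω
    rw [integral_finset_sum (μ := μ)
        (f := fun k ω => Real.exp (lam * V k ω) + Real.exp (-lam * V k ω)) _
        (fun k _ => (hint_exp lam (abs_of_pos hlam) k).add
          (hint_exp (-lam) (by rw [abs_neg, abs_of_pos hlam]) k))] at h2
    refine h2.trans ?_
    calc ∑ k ∈ Finset.range (m+1),
          ∫ ω, (Real.exp (lam * V k ω) + Real.exp (-lam * V k ω)) ∂μ
        = ∑ k ∈ Finset.range (m+1), ((∫ ω, Real.exp (lam * V k ω) ∂μ)
            + ∫ ω, Real.exp (-lam * V k ω) ∂μ) := by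
          apply Finset.sum_congr rfl; intro k _
          exact integral_add (hint_exp lam (abs_of_pos hlam) k)
            (hint_exp (-lam) (by rw [abs_neg, abs_of_pos hlam]) k)
      _ ≤ ∑ _k ∈ Finset.range (m+1), (Real.exp K + Real.exp K) := by
          apply Finset.sum_le_sum; intro k hk
          have hkm : k ≤ m := Finset.mem_range_succ_iff.mp hk
          exact add_le_add (hmgf k hkm lam (abs_of_pos hlam))
            (hmgf k hkm (-lam) (by rw [abs_neg, abs_of_pos hlam]))
      _ = 2 * (m+1) * Real.exp K := by
          rw [Finset.sum_const, Finset.card_range]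
          push_cast; ring
  -- conclude
  have hZ : lam * ∫ ω, N ω ∂μ ≤ Real.log (2*(m+1)) + K := by
    have h3 : Real.exp (lam * ∫ ω, N ω ∂μ) ≤ 2 * (m+1) * Real.exp K :=
      hjensen.trans hsum
    have h4 : lam * ∫ ω, N ω ∂μ = Real.log (Real.exp (lam * ∫ ω, N ω ∂μ)) :=
      (Real.log_exp _).symm
    rw [h4]
    calc Real.log (Real.exp (lam * ∫ ω, N ω ∂μ))
        ≤ Real.log (2 * (m+1) * Real.exp K) :=
          Real.log_le_log (Real.exp_pos _) h3
      _ = Real.log (2*(m+1)) + K := by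
          rw [Real.log_mul (by positivity) (Real.exp_ne_zero K), Real.log_exp]
  rw [le_div_iff₀ hlam]
  calc (∫ ω, N ω ∂μ) * lam = lam * ∫ ω, N ω ∂μ := by ring
    _ ≤ _ := hZ

lemma arith1 {L nq : ℝ} (hL : 0 < L) (hnq : 0 < nq) :
    Real.sqrt (L/nq) * Real.sqrt (L * nq) = L := by
  rw [← Real.sqrt_mul (div_nonneg hL.le hnq.le)]
  have h : L / nq * (L * nq) = L^2 := by field_simp
  rw [h, Real.sqrt_sq hL.le]

lemma sqrt_ineq_helper {lg nr q : ℝ} (hn : 0 < nr) (hq : 0 ≤ q) (hlg : 0 ≤ lg) :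
    Real.sqrt ((2*lg)*(nr*q)) / nr ≤ 2 * Real.sqrt (q*lg/nr) := by
  have h1 : Real.sqrt ((2*lg)*(nr*q)) / nr = Real.sqrt ((2*lg)*(nr*q)/nr^2) := by
    rw [Real.sqrt_div (by positivity), Real.sqrt_sq hn.le]
  rw [h1]
  have h2 : (2*lg)*(nr*q)/nr^2 = 2*(q*lg/nr) := by field_simp
  rw [h2, Real.sqrt_mul (by norm_num : (0:ℝ) ≤ 2)]
  have h3 : Real.sqrt 2 ≤ 2 := by
    nlinarith [Real.sq_sqrt (by norm_num : (0:ℝ) ≤ 2), Real.sqrt_nonneg 2]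
  nlinarith [Real.sqrt_nonneg (q*lg/nr)]

lemma qn_le_sqrt {q lg nr : ℝ} (hq : 0 ≤ q) (hn : 0 < nr) (hlg : 1 ≤ lg)
    (hsm : q * lg / nr < 1) :
    q / nr ≤ Real.sqrt (q * lg / nr) := by
  have hqn : q ≤ nr * lg := by
    by_contra hc; push_neg at hc
    have h1 : 1 ≤ q * lg / nr := by
      rw [le_div_iff₀ hn]; nlinarith
    linarith
  rw [show q / nr = Real.sqrt ((q/nr)^2) by rw [Real.sqrt_sq (by positivity)]]
  apply Real.sqrt_le_sqrt
  rw [div_pow, div_le_div_iff₀ (by positivity) hn]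
  nlinarith [mul_le_mul_of_nonneg_left hqn (mul_nonneg hq hn.le)]

end Stmt16Aux

open Stmt16Aux

set_option maxHeartbeats 1000000 in
/-- let `F̂_n` be the empirical CDF of `n` i.i.d. samples from a CDF `F`
with density `f` satisfying `f ≤ f_max` on `|t - τ*| ≤ D`. Then there is a universal
constant `C > 0` such that for all `n ≥ 5` and `0 < δ ≤ D`,
`E[ sup_{|t-τ*|≤δ} |(F̂_n(t) - F(t)) - (F̂_n(τ*) - F(τ*))| ]
  ≤ C(√(δ f_max log n / n) + log n / n)`. -/
theorem stmt16 {Ω : Type*} [MeasurableSpace Ω] (μ : Measure Ω) [IsProbabilityMeasure μ]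
    (F f : ℝ → ℝ)
    (hF : ∀ t : ℝ, HasDerivAt F (f t) t)
    (Y : ℕ → Ω → ℝ)
    (hYmeas : ∀ i, Measurable (Y i))
    (hiid : iIndepFun (m := fun _ : ℕ => (inferInstance : MeasurableSpace ℝ)) Y μ)
    (hY : ∀ i : ℕ, ∀ t : ℝ, (μ {ω | Y i ω ≤ t}).toReal = F t)
    (τstar : ℝ) (fmax D : ℝ) (hD : 0 < D)
    (hfbd : ∀ t : ℝ, |t - τstar| ≤ D → f t ≤ fmax) :
    ∃ C : ℝ, 0 < C ∧ ∀ n : ℕ, 5 ≤ n → ∀ δ : ℝ, 0 < δ → δ ≤ D →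
      (∫⁻ ω, ENNReal.ofReal
          (⨆ t : {t : ℝ // |t - τstar| ≤ δ},
            |(empCDF Y n ω t - F (t : ℝ)) - (empCDF Y n ω τstar - F τstar)|) ∂μ) ≤
        ENNReal.ofReal (C * (Real.sqrt (δ * fmax * Real.log n / n) +
          Real.log n / n)) := by
  classical
  -- basic facts about F
  have hFmono : Monotone F := by
    intro s t hst
    rw [← hY 0 s, ← hY 0 t]
    exact ENNReal.toReal_mono (measure_ne_top μ _)
      (measure_mono (fun ω hω => le_trans hω hst))
  have hF0 : ∀ t, 0 ≤ F t := fun t => (hY 0 t) ▸ ENNReal.toReal_nonneg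
  have hF1 : ∀ t, F t ≤ 1 := by
    intro t
    rw [← hY 0 t]
    exact ENNReal.toReal_le_of_le_ofReal one_pos.le (by simpa using prob_le_one)
  have hf0 : ∀ x, 0 ≤ f x := by
    intro x
    have hs := hasDerivAt_iff_tendsto_slope.mp (hF x)
    refine ge_of_tendsto hs ?_
    filter_upwards [self_mem_nhdsWithin] with y hy
    have hyx : y ≠ x := hy
    rcases lt_or_gt_of_ne hyx with h | h
    · rw [slope_def_field]
      apply div_nonneg_of_nonpos
      · simpa using sub_nonpos.mpr (hFmono h.le)
      · simpa using sub_nonpos.mpr h.le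
    · rw [slope_def_field]
      apply div_nonneg
      · simpa using sub_nonneg.mpr (hFmono h.le)
      · simpa using sub_nonneg.mpr h.le
  have hfmax0 : 0 ≤ fmax :=
    le_trans (hf0 τstar) (hfbd τstar (by simpa using hD.le))
  have hLip : ∀ a b : ℝ, |a - τstar| ≤ D → |b - τstar| ≤ D → |F b - F a| ≤ fmax * |b - a| := by
    intro a b ha hb
    have hset : ∀ x ∈ Set.Icc (τstar - D) (τstar + D),
        HasDerivWithinAt F (f x) (Set.Icc (τstar - D) (τstar + D)) x :=
      fun x _ => (hF x).hasDerivWithinAt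
    have hbd : ∀ x ∈ Set.Icc (τstar - D) (τstar + D), ‖f x‖ ≤ fmax := by
      intro x hx
      rw [Real.norm_eq_abs, abs_of_nonneg (hf0 x)]
      exact hfbd x (abs_le.mpr ⟨by linarith [hx.1], by linarith [hx.2]⟩)
    have ha' : a ∈ Set.Icc (τstar - D) (τstar + D) := by
      rcases abs_le.mp ha with ⟨h1, h2⟩
      exact ⟨by linarith, by linarith⟩
    have hb' : b ∈ Set.Icc (τstar - D) (τstar + D) := by
      rcases abs_le.mp hb with ⟨h1, h2⟩
      exact ⟨by linarith, by linarith⟩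
    have := (convex_Icc (τstar - D) (τstar + D)).norm_image_sub_le_of_norm_hasDerivWithin_le
      hset hbd ha' hb'
    simpa [Real.norm_eq_abs] using this
  refine ⟨10, by norm_num, ?_⟩
  intro n hn δ hδ hδD
  have hnpos : (0:ℝ) < n := by
    have : (5:ℝ) ≤ n := by exact_mod_cast hn
    linarith
  have hn5 : (5:ℝ) ≤ n := by exact_mod_cast hn
  have hlog1 : 1 ≤ Real.log n := by
    rw [← Real.log_exp 1]
    apply Real.log_le_log (Real.exp_pos 1)
    have := Real.exp_one_lt_d9
    linarith
  have hlogpos : (0:ℝ) < Real.log n := by linarith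
  haveI hne : Nonempty {t : ℝ // |t - τstar| ≤ δ} := ⟨⟨τstar, by simpa using hδ.le⟩⟩
  -- uniform bound on the increments
  have hgb : ∀ (ω : Ω) (t : ℝ),
      |(empCDF Y n ω t - F t) - (empCDF Y n ω τstar - F τstar)| ≤ 4 := by
    intro ω t
    have h1 := empCDF_le_one Y n ω t
    have h2 := empCDF_nonneg Y n ω t
    have h3 := empCDF_le_one Y n ω τstar
    have h4 := empCDF_nonneg Y n ω τstar
    have h5 := hF0 t; have h6 := hF1 t; have h7 := hF0 τstar; have h8 := hF1 τstar
    rw [abs_le]; constructor <;> linarith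
  have htriv : (∫⁻ ω, ENNReal.ofReal
        (⨆ t : {t : ℝ // |t - τstar| ≤ δ},
          |(empCDF Y n ω t - F (t : ℝ)) - (empCDF Y n ω τstar - F τstar)|) ∂μ)
      ≤ ENNReal.ofReal 4 := by
    calc (∫⁻ ω, ENNReal.ofReal
        (⨆ t : {t : ℝ // |t - τstar| ≤ δ},
          |(empCDF Y n ω t - F (t : ℝ)) - (empCDF Y n ω τstar - F τstar)|) ∂μ)
        ≤ ∫⁻ _ω, ENNReal.ofReal 4 ∂μ := by
          apply lintegral_mono; intro ω
          exact ENNReal.ofReal_le_ofReal (ciSup_le (fun t => hgb ω t))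
      _ = ENNReal.ofReal 4 := by simp
  have hsq0 : 0 ≤ Real.sqrt (δ * fmax * Real.log n / n) := Real.sqrt_nonneg _
  have hlogn0 : 0 ≤ Real.log n / n := by positivity
  rcases le_or_gt 1 (δ * fmax * Real.log n / n) with hbig | hsmall
  · -- trivial case : the sqrt term alone is at least 1
    refine htriv.trans (ENNReal.ofReal_le_ofReal ?_)
    have h1 : 1 ≤ Real.sqrt (δ * fmax * Real.log n / n) := by
      rw [show (1:ℝ) = Real.sqrt 1 by simp]
      exact Real.sqrt_le_sqrt hbig
    linarith
  -- main case
  have hQ0 : 0 ≤ δ * fmax := by positivity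
  set Q : ℝ := δ * fmax with hQdef
  set h : ℝ := δ / n with hhdef
  have hh : 0 < h := div_pos hδ hnpos
  set m : ℕ := 2 * n with hmdef
  set tk : ℕ → ℝ := fun k => τstar - δ + k * h with htkdef
  have hmh : (m:ℝ) * h = 2 * δ := by
    rw [hmdef, hhdef]; push_cast
    rw [mul_assoc, mul_div_assoc', mul_comm (n:ℝ) δ, mul_div_assoc,
      div_self hnpos.ne', mul_one]
  have htk_mem : ∀ k, k ≤ m → |tk k - τstar| ≤ δ := by
    intro k hk
    have hk' : (k:ℝ) ≤ m := by exact_mod_cast hk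
    have h1 : 0 ≤ (k:ℝ) * h := by positivity
    have h2 : (k:ℝ) * h ≤ (m:ℝ) * h := mul_le_mul_of_nonneg_right hk' hh.le
    rw [htkdef, abs_le]; constructor <;> [skip; skip] <;> simp only [] <;> nlinarith
  -- probabilities of the little intervals
  have hIoc : ∀ (a b : ℝ), a ≤ b → ∀ i, (μ (Y i ⁻¹' Set.Ioc a b)).toReal = F b - F a := by
    intro a b hab i
    have hseteq : Y i ⁻¹' Set.Ioc a b = {ω | Y i ω ≤ b} \ {ω | Y i ω ≤ a} := by
      ext ω
      simp only [Set.mem_preimage, Set.mem_Ioc, Set.mem_diff, Set.mem_setOf_eq, not_le]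
      exact ⟨fun hh' => ⟨hh'.2, hh'.1⟩, fun hh' => ⟨hh'.2, hh'.1⟩⟩
    have hsub : {ω | Y i ω ≤ a} ⊆ {ω | Y i ω ≤ b} := fun ω hω => le_trans hω hab
    rw [hseteq, measure_diff hsub (((hYmeas i) measurableSet_Iic).nullMeasurableSet)
        (measure_ne_top μ _),
      ENNReal.toReal_sub_of_le (measure_mono hsub) (measure_ne_top μ _), hY i b, hY i a]
  set p : ℕ → ℝ := fun k => F (max (tk k) τstar) - F (min (tk k) τstar) with hpdef
  have hp0 : ∀ k, 0 ≤ p k := fun k => sub_nonneg.mpr (hFmono (min_le_max))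
  have hp1 : ∀ k, p k ≤ 1 := fun k => by
    have := hF1 (max (tk k) τstar); have := hF0 (min (tk k) τstar)
    rw [hpdef]; dsimp only; linarith
  have hpQ : ∀ k, k ≤ m → p k ≤ Q := by
    intro k hk
    have h1 : |tk k - τstar| ≤ δ := htk_mem k hk
    have h2 : |min (tk k) τstar - τstar| ≤ D := by
      rcases le_total (tk k) τstar with hc | hc
      · rw [min_eq_left hc]; exact le_trans h1 hδD
      · rw [min_eq_right hc]; simpa using hD.le
    have h3 : |max (tk k) τstar - τstar| ≤ D := by
      rcases le_total (tk k) τstar with hc | hc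
      · rw [max_eq_right hc]; simpa using hD.le
      · rw [max_eq_left hc]; exact le_trans h1 hδD
    have h4 := hLip (min (tk k) τstar) (max (tk k) τstar) h2 h3
    have h5 : |max (tk k) τstar - min (tk k) τstar| = |tk k - τstar| := by
      rcases le_total (tk k) τstar with hc | hc
      · rw [max_eq_right hc, min_eq_left hc, abs_sub_comm]
      · rw [max_eq_left hc, min_eq_right hc]
    have h6 : p k ≤ fmax * |tk k - τstar| := by
      rw [hpdef]; dsimp only
      calc F (max (tk k) τstar) - F (min (tk k) τstar)
          ≤ |F (max (tk k) τstar) - F (min (tk k) τstar)| := le_abs_self _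
        _ ≤ fmax * |max (tk k) τstar - min (tk k) τstar| := h4
        _ = fmax * |tk k - τstar| := by rw [h5]
    calc p k ≤ fmax * |tk k - τstar| := h6
      _ ≤ fmax * δ := mul_le_mul_of_nonneg_left h1 hfmax0
      _ = Q := by rw [hQdef]; ring
  set S : ℕ → Ω → ℝ := fun k ω => ∑ i ∈ Finset.range n,
    (Set.Ioc (min (tk k) τstar) (max (tk k) τstar)).indicator (fun _ => (1:ℝ)) (Y i ω)
    with hSdef
  set V : ℕ → Ω → ℝ := fun k ω => S k ω - n * p k with hVdef
  have hSmeas : ∀ k, Measurable (S k) := by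
    intro k
    apply Finset.measurable_sum
    intro i _
    exact (measurable_const.indicator measurableSet_Ioc).comp (hYmeas i)
  have hVmeas : ∀ k, Measurable (V k) := fun k => (hSmeas k).sub measurable_const
  have hS01 : ∀ k ω, 0 ≤ S k ω ∧ S k ω ≤ n := by
    intro k ω
    constructor
    · apply Finset.sum_nonneg; intro i _
      exact Set.indicator_nonneg (fun _ _ => zero_le_one) _
    · calc S k ω ≤ ∑ _i ∈ Finset.range n, (1:ℝ) := by
            apply Finset.sum_le_sum; intro i _
            exact Set.indicator_le_self' (fun _ _ => zero_le_one) _ |>.trans (by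
              by_cases hmem : Y i ω ∈ Set.Ioc (min (tk k) τstar) (max (tk k) τstar) <;>
                simp [hmem])
        _ = n := by simp
  have hVbd : ∀ k ω, |V k ω| ≤ 2 * n := by
    intro k ω
    obtain ⟨h1, h2⟩ := hS01 k ω
    have h3 := hp0 k; have h4 := hp1 k
    have h5 : (n:ℝ) * p k ≤ n := by nlinarith
    have h6 : 0 ≤ (n:ℝ) * p k := by positivity
    rw [hVdef, abs_le]; constructor <;> dsimp only <;> nlinarith
  -- the key identity between the empirical process at grid points and V
  have hVkey : ∀ k ω, |(empCDF Y n ω (tk k) - F (tk k)) - (empCDF Y n ω τstar - F τstar)|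
      = |V k ω| / n := by
    intro k ω
    have hsum : ∀ (a b : ℝ), (∑ i ∈ Finset.range n,
        (Set.Ioc a b).indicator (fun _ => (1:ℝ)) (Y i ω))
        = ∑ i ∈ Finset.range n, if a < Y i ω ∧ Y i ω ≤ b then (1:ℝ) else 0 := by
      intro a b
      apply Finset.sum_congr rfl; intro i _
      by_cases hmem : Y i ω ∈ Set.Ioc a b
      · rw [Set.indicator_of_mem hmem, if_pos (Set.mem_Ioc.mp hmem)]
      · rw [Set.indicator_of_notMem hmem, if_neg (fun hc => hmem (Set.mem_Ioc.mpr hc))]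
    rcases le_total (tk k) τstar with hc | hc
    · have hmin : min (tk k) τstar = tk k := min_eq_left hc
      have hmax : max (tk k) τstar = τstar := max_eq_right hc
      have he : empCDF Y n ω τstar - empCDF Y n ω (tk k) = S k ω / n := by
        rw [empCDF_sub Y n ω hc, hSdef]; dsimp only
        rw [hmin, hmax, hsum]
      have hpk : p k = F τstar - F (tk k) := by rw [hpdef]; dsimp only; rw [hmin, hmax]
      have hg : (empCDF Y n ω (tk k) - F (tk k)) - (empCDF Y n ω τstar - F τstar)
          = -(S k ω / n - p k) := by
        have := he
        rw [hpk]; linarith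
      rw [hg, abs_neg, hVdef]; dsimp only
      rw [show S k ω / (n:ℝ) - p k = (S k ω - (n:ℝ) * p k) / n by rw [sub_div, mul_div_cancel_left₀ _ hnpos.ne'],
        abs_div, abs_of_nonneg hnpos.le]
    · have hmin : min (tk k) τstar = τstar := min_eq_right hc
      have hmax : max (tk k) τstar = tk k := max_eq_left hc
      have he : empCDF Y n ω (tk k) - empCDF Y n ω τstar = S k ω / n := by
        rw [empCDF_sub Y n ω hc, hSdef]; dsimp only
        rw [hmin, hmax, hsum]
      have hpk : p k = F (tk k) - F τstar := by rw [hpdef]; dsimp only; rw [hmin, hmax]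
      have hg : (empCDF Y n ω (tk k) - F (tk k)) - (empCDF Y n ω τstar - F τstar)
          = S k ω / n - p k := by
        rw [hpk]; linarith
      rw [hg, hVdef]; dsimp only
      rw [show S k ω / (n:ℝ) - p k = (S k ω - (n:ℝ) * p k) / n by rw [sub_div, mul_div_cancel_left₀ _ hnpos.ne'],
        abs_div, abs_of_nonneg hnpos.le]
  -- grid covering
  have hgrid : ∀ t : ℝ, |t - τstar| ≤ δ → ∃ k : ℕ, k + 1 ≤ m ∧ tk k ≤ t ∧ t ≤ tk (k+1) := by
    intro t ht
    obtain ⟨hl, hr⟩ := abs_le.mp ht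
    set x := (t - (τstar - δ)) / h with hxdef
    have hx0 : 0 ≤ x := div_nonneg (by linarith) hh.le
    have hxh : x * h = t - (τstar - δ) := div_mul_cancel₀ _ hh.ne'
    by_cases hcase : ⌊x⌋₊ + 1 ≤ m
    · refine ⟨⌊x⌋₊, hcase, ?_, ?_⟩
      · have h1 : (⌊x⌋₊:ℝ) ≤ x := Nat.floor_le hx0
        have h2 : (⌊x⌋₊:ℝ) * h ≤ x * h := mul_le_mul_of_nonneg_right h1 hh.le
        rw [htkdef]; dsimp only; linarith
      · have h1 : x < (⌊x⌋₊:ℝ) + 1 := Nat.lt_floor_add_one x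
        have h2 : x * h ≤ ((⌊x⌋₊:ℝ)+1) * h := mul_le_mul_of_nonneg_right h1.le hh.le
        rw [htkdef]; dsimp only; push_cast; linarith
    · push_neg at hcase
      have hm1 : 1 ≤ m := by omega
      have hmx : (m:ℝ) ≤ x := by
        have h1 : (m:ℕ) ≤ ⌊x⌋₊ := by omega
        calc (m:ℝ) ≤ (⌊x⌋₊:ℝ) := by exact_mod_cast h1
          _ ≤ x := Nat.floor_le hx0
      refine ⟨m - 1, by omega, ?_, ?_⟩
      · rw [htkdef]; dsimp only; rw [Nat.cast_sub hm1]
        have h2 : ((m:ℝ)-1) * h ≤ x * h :=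
          mul_le_mul_of_nonneg_right (by linarith) hh.le
        push_cast; linarith
      · have hsot : m - 1 + 1 = m := by omega
        rw [hsot, htkdef]; dsimp only
        linarith [hmh]
  -- pointwise approximation by grid maximum
  have ne' : (Finset.range (m+1)).Nonempty := Finset.nonempty_range_iff.mpr (Nat.succ_ne_zero m)
  set N : Ω → ℝ := fun ω => (Finset.range (m+1)).sup' ne' (fun k => |V k ω|) with hNdef
  have hVk : ∀ ω, ∀ j, j ≤ m →
      |(empCDF Y n ω (tk j) - F (tk j)) - (empCDF Y n ω τstar - F τstar)| ≤ N ω / n := by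
    intro ω j hj
    rw [hVkey j ω]
    have h1 : |V j ω| ≤ N ω :=
      Finset.le_sup' (fun k => |V k ω|) (Finset.mem_range_succ_iff.mpr hj)
    exact (div_le_div_iff_of_pos_right hnpos).mpr h1
  have hPA : ∀ ω, ∀ t : {t : ℝ // |t - τstar| ≤ δ},
      |(empCDF Y n ω (t:ℝ) - F (t:ℝ)) - (empCDF Y n ω τstar - F τstar)|
        ≤ N ω / n + fmax * h := by
    rintro ω ⟨t, ht⟩
    obtain ⟨k, hk1, hk2, hk3⟩ := hgrid t ht
    have hmemt : |t - τstar| ≤ D := le_trans ht hδD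
    have hmemk : |tk k - τstar| ≤ D := le_trans (htk_mem k (by omega)) hδD
    have hmemk1 : |tk (k+1) - τstar| ≤ D := le_trans (htk_mem (k+1) hk1) hδD
    have hstep : tk (k+1) - tk k = h := by
      rw [htkdef]; dsimp only; push_cast; ring
    have hFk : F (tk (k+1)) - F (tk k) ≤ fmax * h := by
      have hl2 := hLip (tk k) (tk (k+1)) hmemk hmemk1
      have habs : |tk (k+1) - tk k| = h := by rw [hstep, abs_of_pos hh]
      calc F (tk (k+1)) - F (tk k) ≤ |F (tk (k+1)) - F (tk k)| := le_abs_self _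
        _ ≤ fmax * |tk (k+1) - tk k| := hl2
        _ = fmax * h := by rw [habs]
    have hFl : F (tk k) ≤ F t := hFmono hk2
    have hFr : F t ≤ F (tk (k+1)) := hFmono hk3
    have hel : empCDF Y n ω (tk k) ≤ empCDF Y n ω t := empCDF_mono Y n ω hk2
    have her : empCDF Y n ω t ≤ empCDF Y n ω (tk (k+1)) := empCDF_mono Y n ω hk3
    have h1 := abs_le.mp (hVk ω (k+1) hk1)
    have h2 := abs_le.mp (hVk ω k (by omega))
    rw [abs_le]; constructor
    · linarith [h2.1]
    · linarith [h1.2]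
  -- properties of N
  have hNmeas : Measurable N := by
    have hm' : Measurable ((Finset.range (m+1)).sup' ne' (fun k => fun ω => |V k ω|)) :=
      Finset.measurable_sup' ne' (fun k _ => (hVmeas k).abs)
    have he : N = (Finset.range (m+1)).sup' ne' (fun k => fun ω => |V k ω|) := by
      funext ω; rw [hNdef, Finset.sup'_apply]
    rw [he]; exact hm'
  have hN0 : ∀ ω, 0 ≤ N ω := fun ω =>
    le_trans (abs_nonneg (V 0 ω))
      (Finset.le_sup' (fun k => |V k ω|) (Finset.mem_range.mpr (Nat.succ_pos m)))
  have hNB : ∀ ω, N ω ≤ 2*n := fun ω => Finset.sup'_le _ _ (fun k _ => hVbd k ω)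
  have hNint : Integrable N μ := by
    refine Integrable.mono' (integrable_const (2*(n:ℝ))) hNmeas.aestronglyMeasurable ?_
    filter_upwards with ω
    rw [Real.norm_eq_abs, abs_of_nonneg (hN0 ω)]; exact hNB ω
  -- convert the lintegral to a Bochner integral bound
  have hWint : Integrable (fun ω => N ω / n + fmax * h) μ :=
    (hNint.div_const _).add (integrable_const _)
  have hstep1 : (∫⁻ ω, ENNReal.ofReal
        (⨆ t : {t : ℝ // |t - τstar| ≤ δ},
          |(empCDF Y n ω t - F (t : ℝ)) - (empCDF Y n ω τstar - F τstar)|) ∂μ)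
      ≤ ∫⁻ ω, ENNReal.ofReal (N ω / n + fmax * h) ∂μ := by
    apply lintegral_mono; intro ω
    exact ENNReal.ofReal_le_ofReal (ciSup_le (hPA ω))
  have hstep2 : (∫⁻ ω, ENNReal.ofReal (N ω / n + fmax * h) ∂μ)
      = ENNReal.ofReal (∫ ω, (N ω / n + fmax * h) ∂μ) := by
    rw [← ofReal_integral_eq_lintegral_ofReal hWint]
    filter_upwards with ω
    have := hN0 ω
    positivity
  have hstep3 : (∫ ω, (N ω / n + fmax * h) ∂μ) = (∫ ω, N ω ∂μ) / n + fmax * h := by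
    rw [integral_add (hNint.div_const _) (integrable_const _), integral_div, integral_const]
    simp
  -- bound on the expected grid maximum
  set L : ℝ := Real.log (2*((m:ℝ)+1)) with hLdef
  have hLpos : 0 < L := by
    rw [hLdef]
    apply Real.log_pos
    have : (0:ℝ) ≤ (m:ℝ) := Nat.cast_nonneg m
    linarith
  have hL2 : L ≤ 2 * Real.log n := by
    have he : 2*((m:ℝ)+1) = 4*(n:ℝ)+2 := by rw [hmdef]; push_cast; ring
    have h2 : (4*(n:ℝ)+2) ≤ (n:ℝ)^2 := by nlinarith
    calc L = Real.log (4*(n:ℝ)+2) := by rw [hLdef, he]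
      _ ≤ Real.log ((n:ℝ)^2) := Real.log_le_log (by positivity) h2
      _ = 2 * Real.log n := by rw [Real.log_pow]; push_cast; ring
  have hmgfV : ∀ (lam : ℝ), 0 < lam → lam ≤ 1 → ∀ k ≤ m, ∀ s : ℝ, |s| = lam →
      ∫ ω, Real.exp (s * V k ω) ∂μ ≤ Real.exp ((n:ℝ) * p k * lam^2) := by
    intro lam hlam hlam1 k hk s hsl
    have hs1 : |s| ≤ 1 := by rw [hsl]; exact hlam1
    have h2 := integral_exp_dev_le (μ := μ) hYmeas hiid n (min (tk k) τstar)
      (max (tk k) τstar) (p k) (fun i => hIoc _ _ min_le_max i) hs1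
    have hform : (∫ ω, Real.exp (s * V k ω) ∂μ)
        = ∫ ω, Real.exp (s * ((∑ i ∈ Finset.range n,
          (Set.Ioc (min (tk k) τstar) (max (tk k) τstar)).indicator
            (fun _ => (1:ℝ)) (Y i ω)) - n * p k)) ∂μ := by
      rw [hVdef, hSdef]
    rw [hform]
    refine h2.trans (Real.exp_le_exp.mpr ?_)
    have hsq : s^2 = lam^2 := by rw [← sq_abs, hsl]
    rw [hsq]
  have hNsum : (∫ ω, N ω ∂μ) ≤ 2 * Real.sqrt (L * ((n:ℝ) * Q)) + 2 * L := by
    rcases le_or_gt ((n:ℝ) * Q) L with hA | hB2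
    · -- lam = 1
      have hmgf1 : ∀ k ≤ m, ∀ s : ℝ, |s| = 1 →
          ∫ ω, Real.exp (s * V k ω) ∂μ ≤ Real.exp ((n:ℝ) * Q * 1^2) := by
        intro k hk s hsl
        refine (hmgfV 1 one_pos le_rfl k hk s hsl).trans (Real.exp_le_exp.mpr ?_)
        have := hpQ k hk
        nlinarith
      have happ := integral_sup_abs_le (μ := μ) m V hVmeas (B := 2*(n:ℝ))
        (by positivity) hVbd (lam := 1) one_pos (K := (n:ℝ)*Q*1^2) (by positivity) hmgf1
      have hNint_eq : (∫ ω, N ω ∂μ) ≤ (L + (n:ℝ)*Q*1^2) / 1 := happ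
      rw [div_one] at hNint_eq
      have : (∫ ω, N ω ∂μ) ≤ 2 * L := by nlinarith
      nlinarith [Real.sqrt_nonneg (L * ((n:ℝ) * Q))]
    · -- lam = sqrt (L / (n Q))
      have hnQpos : 0 < (n:ℝ) * Q := lt_trans hLpos hB2
      set lam : ℝ := Real.sqrt (L / ((n:ℝ)*Q)) with hlamdef
      have hlam : 0 < lam := Real.sqrt_pos.mpr (div_pos hLpos hnQpos)
      have hlam1 : lam ≤ 1 := by
        rw [hlamdef]
        exact Real.sqrt_le_one.mpr ((div_le_one hnQpos).mpr hB2.le)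
      have hlamsq : lam^2 = L/((n:ℝ)*Q) := Real.sq_sqrt (div_nonneg hLpos.le hnQpos.le)
      have hmgf2 : ∀ k ≤ m, ∀ s : ℝ, |s| = lam →
          ∫ ω, Real.exp (s * V k ω) ∂μ ≤ Real.exp L := by
        intro k hk s hsl
        refine (hmgfV lam hlam hlam1 k hk s hsl).trans (Real.exp_le_exp.mpr ?_)
        have h3 := hpQ k hk
        have h4 : (n:ℝ) * p k * lam^2 ≤ (n:ℝ) * Q * lam^2 :=
          mul_le_mul_of_nonneg_right (mul_le_mul_of_nonneg_left h3 hnpos.le) (sq_nonneg lam)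
        refine h4.trans ?_
        rw [hlamsq, mul_div_cancel₀ _ hnQpos.ne']
      have happ := integral_sup_abs_le (μ := μ) m V hVmeas (B := 2*(n:ℝ))
        (by positivity) hVbd hlam (K := L) hLpos.le hmgf2
      have hss : lam * Real.sqrt (L*((n:ℝ)*Q)) = L := by
        rw [hlamdef]; exact arith1 hLpos hnQpos
      have hdivL : L / lam = Real.sqrt (L*((n:ℝ)*Q)) := by
        rw [eq_comm, eq_div_iff hlam.ne']
        rw [mul_comm]; exact hss
      have : (L + L) / lam = 2 * Real.sqrt (L*((n:ℝ)*Q)) := by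
        rw [show L + L = 2 * L by ring, mul_div_assoc, hdivL]
      rw [this] at happ
      nlinarith [happ, hLpos]
  -- final real-number estimate
  have hfh : fmax * h = Q / n := by rw [hhdef, hQdef]; ring
  have h5 : fmax * h ≤ Real.sqrt (Q * Real.log n / n) := by
    rw [hfh]; exact qn_le_sqrt hQ0 hnpos hlog1 hsmall
  have h2 : Real.sqrt (L*((n:ℝ)*Q)) ≤ Real.sqrt ((2*Real.log n)*((n:ℝ)*Q)) :=
    Real.sqrt_le_sqrt (mul_le_mul_of_nonneg_right hL2 (by positivity))
  have h3 : Real.sqrt ((2*Real.log n)*((n:ℝ)*Q))/(n:ℝ)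
      ≤ 2 * Real.sqrt (Q * Real.log n / n) :=
    sqrt_ineq_helper hnpos hQ0 hlogpos.le
  have hd1 : (∫ ω, N ω ∂μ)/(n:ℝ) ≤ (2 * Real.sqrt (L*((n:ℝ)*Q)) + 2*L)/(n:ℝ) :=
    (div_le_div_iff_of_pos_right hnpos).mpr hNsum
  have hd2 : (2 * Real.sqrt (L*((n:ℝ)*Q)) + 2*L)/(n:ℝ)
      = 2*(Real.sqrt (L*((n:ℝ)*Q))/(n:ℝ)) + 2*(L/(n:ℝ)) := by ring
  have hd3 : Real.sqrt (L*((n:ℝ)*Q))/(n:ℝ)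
      ≤ Real.sqrt ((2*Real.log n)*((n:ℝ)*Q))/(n:ℝ) :=
    (div_le_div_iff_of_pos_right hnpos).mpr h2
  have hd4 : L/(n:ℝ) ≤ (2*Real.log n)/(n:ℝ) :=
    (div_le_div_iff_of_pos_right hnpos).mpr hL2
  have hd5 : (2*Real.log n)/(n:ℝ) = 2*(Real.log n/(n:ℝ)) := by ring
  have hreal : (∫ ω, N ω ∂μ)/(n:ℝ) + fmax * h
      ≤ 10 * (Real.sqrt (Q * Real.log n / n) + Real.log n / n) := by
    rw [hd2] at hd1
    rw [hd5] at hd4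
    linarith
  calc (∫⁻ ω, ENNReal.ofReal
        (⨆ t : {t : ℝ // |t - τstar| ≤ δ},
          |(empCDF Y n ω t - F (t : ℝ)) - (empCDF Y n ω τstar - F τstar)|) ∂μ)
      ≤ ∫⁻ ω, ENNReal.ofReal (N ω / n + fmax * h) ∂μ := hstep1
    _ = ENNReal.ofReal ((∫ ω, N ω ∂μ) / n + fmax * h) := by rw [hstep2, hstep3]
    _ ≤ ENNReal.ofReal (10 * (Real.sqrt (Q * Real.log n / n) + Real.log n / n)) :=
        ENNReal.ofReal_le_ofReal hreal
end

section
/- Let T_1, T_2 be i.i.d. uniform on [0,1] and T_3, T_4 be i.i.d. Beta(1,2), with all four independent; treat T_3, T_4 as negative controls (m = 2) and let p_1, p_2 be the RANC p-values of T_1, T_2. Then P(p_2 = 1 | p_1 = 1/3) = 4/9 > 5/12 = P(p_2 = 1 | p_1 = 2/3); in particular (p_1, p_2) is not positively regression dependent, even though T_1 and T_2 each (uniformly) stochastically dominate T_3 and T_4. -/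
open MeasureTheory ProbabilityTheory
open scoped ENNReal

/-- RANC p-values with two statistics `T 0, T 1` under investigation and two negative
controls `T 2, T 3`: `p_i = (1 + #{j ∈ {2,3} : T_j ≤ T_i})/3`. -/
noncomputable def ranc4 {Ω : Type*} (T : Fin 4 → Ω → ℝ) (i : Fin 2) (ω : Ω) : ℝ :=
  ((1 : ℝ) +
      ({j : Fin 2 | T (Fin.natAdd 2 j) ω ≤ T (Fin.castAdd 2 i) ω} : Set (Fin 2)).ncard) / 3

noncomputable section
namespace Stmt19Aux
open Set


def nu : Measure ℝ := volume.restrict (Set.Icc 0 1)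
def bet : Measure ℝ := nu.withDensity fun x => ENNReal.ofReal (2*(1-x))

instance : IsProbabilityMeasure nu := ⟨by simp [nu, Real.volume_Icc]⟩

lemma intpow (s : ℝ) (n : ℕ) : ∫ t in s..(1:ℝ), (1-t)^n = (1-s)^(n+1)/(n+1) := by
  rw [intervalIntegral.integral_comp_sub_left (fun u : ℝ => u^n) 1, integral_pow]
  norm_num

lemma d_int (a b : ℝ) (hab : a ≤ b) (hb : b ≤ 1) :
    ∫⁻ x in Set.Ioc a b, ENNReal.ofReal (2*(1-x)) = ENNReal.ofReal ((1-a)^2-(1-b)^2) := by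
  rw [← ofReal_integral_eq_lintegral_ofReal]
  · rw [← intervalIntegral.integral_of_le hab]
    have h1 : ∀ x : ℝ, 2*(1-x) = 2 - 2*x := fun x => by ring
    simp_rw [h1]
    rw [intervalIntegral.integral_sub intervalIntegrable_const
      ((by fun_prop : Continuous fun x : ℝ => 2*x).intervalIntegrable _ _),
      intervalIntegral.integral_const, intervalIntegral.integral_const_mul, integral_id]
    simp only [smul_eq_mul]
    ring_nf
  · exact (Continuous.integrableOn_Ioc (by continuity))
  · exact (ae_restrict_iff' measurableSet_Ioc).mpr
      (ae_of_all _ fun x hx => by simp only [Pi.zero_apply]; nlinarith [hx.2])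

lemma bet_Ioc {a b : ℝ} (ha : a ∈ Set.Icc (0:ℝ) 1) (hb : b ∈ Set.Icc (0:ℝ) 1) :
    bet (Set.Ioc a b) = ENNReal.ofReal ((1-a)^2-(1-b)^2) := by
  rcases le_or_gt a b with hab | hba
  · rw [bet, withDensity_apply _ measurableSet_Ioc, nu,
      Measure.restrict_restrict measurableSet_Ioc]
    have h : Set.Ioc a b ∩ Set.Icc 0 1 = Set.Ioc a b :=
      Set.inter_eq_left.mpr fun x hx => ⟨le_trans ha.1 hx.1.le, le_trans hx.2 hb.2⟩
    rw [h]; exact d_int a b hab hb.2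
  · rw [Set.Ioc_eq_empty (not_lt.mpr hba.le), measure_empty]
    symm
    rw [ENNReal.ofReal_eq_zero]
    nlinarith [ha.2, hb.2, hba]

lemma bet_Ioi {a : ℝ} (ha : a ∈ Set.Icc (0:ℝ) 1) :
    bet (Set.Ioi a) = ENNReal.ofReal ((1-a)^2) := by
  rw [bet, withDensity_apply _ measurableSet_Ioi, nu,
    Measure.restrict_restrict measurableSet_Ioi]
  have h : Set.Ioi a ∩ Set.Icc 0 1 = Set.Ioc a 1 := by
    ext x; simp only [Set.mem_inter_iff, Set.mem_Ioi, Set.mem_Icc, Set.mem_Ioc]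
    exact ⟨fun ⟨h1, _, h3⟩ => ⟨h1, h3⟩, fun ⟨h1, h2⟩ => ⟨h1, le_trans ha.1 h1.le, h2⟩⟩
  rw [h, d_int a 1 ha.2 le_rfl]
  norm_num

lemma bet_Iic {a : ℝ} (ha : a ∈ Set.Icc (0:ℝ) 1) :
    bet (Set.Iic a) = ENNReal.ofReal (1-(1-a)^2) := by
  rw [bet, withDensity_apply _ measurableSet_Iic, nu,
    Measure.restrict_restrict measurableSet_Iic]
  have h : Set.Iic a ∩ Set.Icc 0 1 = Set.Icc 0 a := by
    ext x; simp only [Set.mem_inter_iff, Set.mem_Iic, Set.mem_Icc]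
    exact ⟨fun ⟨h1, h2, _⟩ => ⟨h2, h1⟩, fun ⟨h1, h2⟩ => ⟨h2, h1, le_trans h2 ha.2⟩⟩
  rw [h, ← Measure.restrict_congr_set Ioc_ae_eq_Icc, d_int 0 a ha.1 ha.2]
  norm_num

instance : IsProbabilityMeasure bet := ⟨by
  rw [bet, withDensity_apply _ MeasurableSet.univ, Measure.restrict_univ, nu,
    ← Measure.restrict_congr_set Ioc_ae_eq_Icc, d_int 0 1 zero_le_one le_rfl]
  norm_num⟩

lemma ae_mem_pair : ∀ᵐ z ∂(nu.prod nu), z ∈ (Set.Icc (0:ℝ) 1) ×ˢ (Set.Icc (0:ℝ) 1) := by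
  rw [nu, Measure.prod_restrict]
  exact ae_restrict_mem (measurableSet_Icc.prod measurableSet_Icc)

lemma ae_mem_nu : ∀ᵐ s ∂nu, s ∈ Set.Icc (0:ℝ) 1 := by
  rw [nu]; exact ae_restrict_mem measurableSet_Icc

lemma outer (g : ℝ → ℝ) (hg : Continuous g) (hnn : ∀ s ∈ Set.Icc (0:ℝ) 1, 0 ≤ g s) :
    ∫⁻ s, ENNReal.ofReal (g s) ∂nu = ENNReal.ofReal (∫ s in (0:ℝ)..1, g s) := by
  rw [nu, ← ofReal_integral_eq_lintegral_ofReal hg.integrableOn_Icc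
    ((ae_restrict_iff' measurableSet_Icc).mpr
      (ae_of_all _ fun s hs => by simpa using hnn s hs)),
    integral_Icc_eq_integral_Ioc, ← intervalIntegral.integral_of_le zero_le_one]

def SA : Set ((ℝ×ℝ)×(ℝ×ℝ)) := {q | q.1.1 < q.2.1 ∧ q.1.1 < q.2.2}
def SB : Set ((ℝ×ℝ)×(ℝ×ℝ)) := {q | q.2.1 ≤ q.1.2 ∧ q.2.2 ≤ q.1.2}
def SC : Set ((ℝ×ℝ)×(ℝ×ℝ)) :=
  {q | (q.2.1 ≤ q.1.1 ∧ q.1.1 < q.2.2) ∨ (q.1.1 < q.2.1 ∧ q.2.2 ≤ q.1.1)}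

lemma mSA : MeasurableSet SA :=
  (measurableSet_lt measurable_fst.fst measurable_snd.fst).inter
    (measurableSet_lt measurable_fst.fst measurable_snd.snd)
lemma mSB : MeasurableSet SB :=
  (measurableSet_le measurable_snd.fst measurable_fst.snd).inter
    (measurableSet_le measurable_snd.snd measurable_fst.snd)
lemma mSC : MeasurableSet SC :=
  ((measurableSet_le measurable_snd.fst measurable_fst.fst).inter
    (measurableSet_lt measurable_fst.fst measurable_snd.snd)).union
  ((measurableSet_lt measurable_fst.fst measurable_snd.fst).inter
    (measurableSet_le measurable_snd.snd measurable_fst.fst))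

lemma measA : ((nu.prod nu).prod (bet.prod bet)) SA = ENNReal.ofReal (1/5) := by
  rw [Measure.prod_apply mSA]
  have hsec : ∀ z : ℝ×ℝ, (Prod.mk z ⁻¹' SA) = Set.Ioi z.1 ×ˢ Set.Ioi z.1 := fun z => by
    ext p; simp [SA, Set.mem_prod]
  simp_rw [hsec, Measure.prod_prod]
  have hcong : (fun z : ℝ×ℝ => bet (Set.Ioi z.1) * bet (Set.Ioi z.1)) =ᵐ[nu.prod nu]
      fun z => ENNReal.ofReal ((1-z.1)^2 * (1-z.1)^2) := by
    filter_upwards [ae_mem_pair] with z hz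
    rw [bet_Ioi hz.1, ← ENNReal.ofReal_mul (sq_nonneg _)]
  have hm : Measurable fun z : ℝ×ℝ => ENNReal.ofReal ((1-z.1)^2 * (1-z.1)^2) :=
    (by fun_prop : Measurable fun z : ℝ×ℝ => (1-z.1)^2*(1-z.1)^2).ennreal_ofReal
  rw [lintegral_congr_ae hcong, lintegral_prod _ hm.aemeasurable]
  simp_rw [lintegral_const, measure_univ, mul_one]
  rw [outer _ (by fun_prop) (fun s _ => by positivity)]
  have h4 : ∀ s : ℝ, (1-s)^2*(1-s)^2 = (1-s)^4 := fun s => by ring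
  simp_rw [h4]
  rw [intpow 0 4]; norm_num

lemma measC : ((nu.prod nu).prod (bet.prod bet)) SC = ENNReal.ofReal (4/15) := by
  rw [Measure.prod_apply mSC]
  have hsec : ∀ z : ℝ×ℝ, (Prod.mk z ⁻¹' SC)
      = (Set.Iic z.1 ×ˢ Set.Ioi z.1) ∪ (Set.Ioi z.1 ×ˢ Set.Iic z.1) := fun z => by
    ext p; simp [SC, Set.mem_prod]
  have hdisj : ∀ z : ℝ×ℝ, Disjoint (Set.Iic z.1 ×ˢ Set.Ioi z.1) (Set.Ioi z.1 ×ˢ Set.Iic z.1) := by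
    intro z
    refine Set.disjoint_left.mpr ?_
    rintro ⟨x, y⟩ ⟨hx, -⟩ ⟨hx', -⟩
    exact absurd (Set.mem_Iic.mp hx) (not_le.mpr (Set.mem_Ioi.mp hx'))
  have hm2 : ∀ z : ℝ×ℝ, MeasurableSet (Set.Ioi z.1 ×ˢ Set.Iic z.1) := fun z =>
    measurableSet_Ioi.prod measurableSet_Iic
  simp_rw [hsec]
  have hEq : ∀ z : ℝ×ℝ, (bet.prod bet) ((Set.Iic z.1 ×ˢ Set.Ioi z.1) ∪ (Set.Ioi z.1 ×ˢ Set.Iic z.1))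
      = bet (Set.Iic z.1) * bet (Set.Ioi z.1) + bet (Set.Ioi z.1) * bet (Set.Iic z.1) := fun z => by
    rw [measure_union (hdisj z) (hm2 z), Measure.prod_prod, Measure.prod_prod]
  simp_rw [hEq]
  have hcong : (fun z : ℝ×ℝ => bet (Set.Iic z.1) * bet (Set.Ioi z.1)
        + bet (Set.Ioi z.1) * bet (Set.Iic z.1)) =ᵐ[nu.prod nu]
      fun z => ENNReal.ofReal (2*(1-z.1)^2 - 2*(1-z.1)^4) := by
    filter_upwards [ae_mem_pair] with z hz
    have h1 : (0:ℝ) ≤ 1-(1-z.1)^2 := by nlinarith [hz.1.1, hz.1.2]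
    rw [bet_Iic hz.1, bet_Ioi hz.1, ← ENNReal.ofReal_mul h1,
      ← ENNReal.ofReal_mul (sq_nonneg _), ← ENNReal.ofReal_add (by nlinarith) (by nlinarith)]
    congr 1; ring
  have hm : Measurable fun z : ℝ×ℝ => ENNReal.ofReal (2*(1-z.1)^2 - 2*(1-z.1)^4) :=
    (by fun_prop : Measurable fun z : ℝ×ℝ => 2*(1-z.1)^2 - 2*(1-z.1)^4).ennreal_ofReal
  rw [lintegral_congr_ae hcong, lintegral_prod _ hm.aemeasurable]
  simp_rw [lintegral_const, measure_univ, mul_one]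
  rw [outer _ (by fun_prop) (fun s hs => by
    have h1 : (1-s)^4 ≤ (1-s)^2 :=
      pow_le_pow_of_le_one (by linarith [hs.2]) (by linarith [hs.1]) (by norm_num)
    linarith)]
  rw [intervalIntegral.integral_sub
    ((by fun_prop : Continuous fun s:ℝ => 2*(1-s)^2).intervalIntegrable _ _)
    ((by fun_prop : Continuous fun s:ℝ => 2*(1-s)^4).intervalIntegrable _ _),
    intervalIntegral.integral_const_mul, intervalIntegral.integral_const_mul, intpow, intpow]
  norm_num


lemma innerAB {s : ℝ} (hs : s ∈ Set.Icc (0:ℝ) 1) :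
    ∫⁻ t, ENNReal.ofReal ((1-s)^2-(1-t)^2) * ENNReal.ofReal ((1-s)^2-(1-t)^2) ∂nu
      = ENNReal.ofReal ((8/15)*(1-s)^5) := by
  rw [nu, ← Set.Icc_union_Ioc_eq_Icc hs.1 hs.2,
    lintegral_union measurableSet_Ioc (((Set.Iic_disjoint_Ioc le_rfl).mono Set.Icc_subset_Iic_self le_rfl))]
  have h1 : (∫⁻ t in Set.Icc (0:ℝ) s,
      ENNReal.ofReal ((1-s)^2-(1-t)^2) * ENNReal.ofReal ((1-s)^2-(1-t)^2) ∂volume) = 0 := by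
    rw [setLIntegral_congr_fun measurableSet_Icc (g := fun _ => 0)
      (fun t ht => by
        rw [ENNReal.ofReal_eq_zero.mpr
          (by nlinarith [ht.1, ht.2, hs.2] : (1-s)^2-(1-t)^2 ≤ 0), zero_mul]),
      lintegral_zero]
  have h2 : (∫⁻ t in Set.Ioc s 1,
      ENNReal.ofReal ((1-s)^2-(1-t)^2) * ENNReal.ofReal ((1-s)^2-(1-t)^2) ∂volume)
      = ENNReal.ofReal ((8/15)*(1-s)^5) := by
    rw [setLIntegral_congr_fun measurableSet_Ioc
      (g := fun t => ENNReal.ofReal (((1-s)^2-(1-t)^2)*((1-s)^2-(1-t)^2)))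
      (fun t ht =>
        (ENNReal.ofReal_mul (by nlinarith [ht.1, ht.2, hs.1] :
          (0:ℝ) ≤ (1-s)^2-(1-t)^2)).symm),
      ← ofReal_integral_eq_lintegral_ofReal
        ((by fun_prop : Continuous fun t:ℝ => ((1-s)^2-(1-t)^2)*((1-s)^2-(1-t)^2)).integrableOn_Ioc)
        (ae_of_all _ fun t => mul_self_nonneg _)]
    congr 1
    rw [← intervalIntegral.integral_of_le hs.2]
    have hexp : ∀ t : ℝ, ((1-s)^2-(1-t)^2)*((1-s)^2-(1-t)^2)
        = ((1-s)^2*(1-s)^2) - (2*(1-s)^2)*(1-t)^2 + (1-t)^4 := fun t => by ring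
    simp_rw [hexp]
    rw [intervalIntegral.integral_add
        (intervalIntegrable_const.sub
          ((by fun_prop :
            Continuous fun t:ℝ => (2*(1-s)^2)*(1-t)^2).intervalIntegrable _ _))
        ((by fun_prop : Continuous fun t:ℝ => (1-t)^4).intervalIntegrable _ _),
      intervalIntegral.integral_sub intervalIntegrable_const
        ((by fun_prop :
          Continuous fun t:ℝ => (2*(1-s)^2)*(1-t)^2).intervalIntegrable _ _),
      intervalIntegral.integral_const, intervalIntegral.integral_const_mul, intpow, intpow]
    simp only [smul_eq_mul]
    ring
  rw [h1, h2, zero_add]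

lemma measAB : ((nu.prod nu).prod (bet.prod bet)) (SA ∩ SB) = ENNReal.ofReal (4/45) := by
  rw [Measure.prod_apply (mSA.inter mSB)]
  have hsec : ∀ z : ℝ×ℝ, (Prod.mk z ⁻¹' (SA ∩ SB)) = Set.Ioc z.1 z.2 ×ˢ Set.Ioc z.1 z.2 :=
    fun z => by
      ext p
      simp only [SA, SB, Set.mem_preimage, Set.mem_inter_iff, Set.mem_setOf_eq, Set.mem_prod,
        Set.mem_Ioc]
      tauto
  simp_rw [hsec, Measure.prod_prod]
  have hcong : (fun z : ℝ×ℝ => bet (Set.Ioc z.1 z.2) * bet (Set.Ioc z.1 z.2)) =ᵐ[nu.prod nu]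
      fun z => ENNReal.ofReal ((1-z.1)^2-(1-z.2)^2) * ENNReal.ofReal ((1-z.1)^2-(1-z.2)^2) := by
    filter_upwards [ae_mem_pair] with z hz
    rw [bet_Ioc hz.1 hz.2]
  have hm : Measurable fun z : ℝ×ℝ =>
      ENNReal.ofReal ((1-z.1)^2-(1-z.2)^2) * ENNReal.ofReal ((1-z.1)^2-(1-z.2)^2) :=
    ((by fun_prop : Measurable fun z : ℝ×ℝ => (1-z.1)^2-(1-z.2)^2).ennreal_ofReal).mul
      ((by fun_prop : Measurable fun z : ℝ×ℝ => (1-z.1)^2-(1-z.2)^2).ennreal_ofReal)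
  rw [lintegral_congr_ae hcong, lintegral_prod _ hm.aemeasurable,
    lintegral_congr_ae (g := fun s => ENNReal.ofReal ((8/15)*(1-s)^5))
      (by filter_upwards [ae_mem_nu] with s hs using innerAB hs),
    outer _ (by fun_prop) (fun s hs =>
      mul_nonneg (by norm_num) (pow_nonneg (by linarith [hs.2]) 5))]
  congr 1
  rw [intervalIntegral.integral_const_mul, intpow]
  norm_num

lemma innerCB {s : ℝ} (hs : s ∈ Set.Icc (0:ℝ) 1) :
    ∫⁻ t, (ENNReal.ofReal (1-(1-min s t)^2) * ENNReal.ofReal ((1-s)^2-(1-t)^2)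
        + ENNReal.ofReal ((1-s)^2-(1-t)^2) * ENNReal.ofReal (1-(1-min s t)^2)) ∂nu
      = ENNReal.ofReal ((4/3)*((1-s)^3-(1-s)^5)) := by
  have ha : (0:ℝ) ≤ 1-(1-s)^2 := by nlinarith [hs.1, hs.2]
  rw [nu, ← Set.Icc_union_Ioc_eq_Icc hs.1 hs.2,
    lintegral_union measurableSet_Ioc (((Set.Iic_disjoint_Ioc le_rfl).mono Set.Icc_subset_Iic_self le_rfl))]
  have h1 : (∫⁻ t in Set.Icc (0:ℝ) s,
      (ENNReal.ofReal (1-(1-min s t)^2) * ENNReal.ofReal ((1-s)^2-(1-t)^2)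
        + ENNReal.ofReal ((1-s)^2-(1-t)^2) * ENNReal.ofReal (1-(1-min s t)^2)) ∂volume) = 0 := by
    rw [setLIntegral_congr_fun measurableSet_Icc (g := fun _ => 0)
      (fun t ht => by
        rw [ENNReal.ofReal_eq_zero.mpr
          (by nlinarith [ht.1, ht.2, hs.2] : (1-s)^2-(1-t)^2 ≤ 0), mul_zero, zero_mul,
          add_zero]),
      lintegral_zero]
  have h2 : (∫⁻ t in Set.Ioc s 1,
      (ENNReal.ofReal (1-(1-min s t)^2) * ENNReal.ofReal ((1-s)^2-(1-t)^2)
        + ENNReal.ofReal ((1-s)^2-(1-t)^2) * ENNReal.ofReal (1-(1-min s t)^2)) ∂volume)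
      = ENNReal.ofReal ((4/3)*((1-s)^3-(1-s)^5)) := by
    rw [setLIntegral_congr_fun measurableSet_Ioc
      (g := fun t => ENNReal.ofReal ((1-(1-s)^2)*((1-s)^2-(1-t)^2)
        + ((1-s)^2-(1-t)^2)*(1-(1-s)^2)))
      (fun t ht => by
        have hD : (0:ℝ) ≤ (1-s)^2-(1-t)^2 := by nlinarith [ht.1, ht.2, hs.1]
        show _ = ENNReal.ofReal ((1-(1-s)^2)*((1-s)^2-(1-t)^2)
          + ((1-s)^2-(1-t)^2)*(1-(1-s)^2))
        rw [min_eq_left ht.1.le, ENNReal.ofReal_add (mul_nonneg ha hD) (mul_nonneg hD ha),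
          ENNReal.ofReal_mul ha, ENNReal.ofReal_mul hD]),
      ← ofReal_integral_eq_lintegral_ofReal
        ((by fun_prop : Continuous fun t:ℝ => (1-(1-s)^2)*((1-s)^2-(1-t)^2)
          + ((1-s)^2-(1-t)^2)*(1-(1-s)^2)).integrableOn_Ioc)
        ((ae_restrict_iff' measurableSet_Ioc).mpr (ae_of_all _ fun t ht => by
          have hD : (0:ℝ) ≤ (1-s)^2-(1-t)^2 := by nlinarith [ht.1, ht.2, hs.1]
          simp only [Pi.zero_apply]
          nlinarith [mul_nonneg ha hD]))]
    congr 1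
    rw [← intervalIntegral.integral_of_le hs.2]
    have hexp : ∀ t : ℝ, (1-(1-s)^2)*((1-s)^2-(1-t)^2) + ((1-s)^2-(1-t)^2)*(1-(1-s)^2)
        = (2*(1-(1-s)^2)*(1-s)^2) - (2*(1-(1-s)^2))*(1-t)^2 := fun t => by ring
    simp_rw [hexp]
    rw [intervalIntegral.integral_sub intervalIntegrable_const
        ((by fun_prop :
          Continuous fun t:ℝ => (2*(1-(1-s)^2))*(1-t)^2).intervalIntegrable _ _),
      intervalIntegral.integral_const, intervalIntegral.integral_const_mul, intpow]
    simp only [smul_eq_mul]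
    ring
  rw [h1, h2, zero_add]

lemma measCB : ((nu.prod nu).prod (bet.prod bet)) (SC ∩ SB) = ENNReal.ofReal (1/9) := by
  rw [Measure.prod_apply (mSC.inter mSB)]
  have hsec : ∀ z : ℝ×ℝ, (Prod.mk z ⁻¹' (SC ∩ SB))
      = ((Set.Iic z.1 ∩ Set.Iic z.2) ×ˢ Set.Ioc z.1 z.2)
        ∪ (Set.Ioc z.1 z.2 ×ˢ (Set.Iic z.1 ∩ Set.Iic z.2)) := fun z => by
    ext p
    simp only [SC, SB, Set.mem_preimage, Set.mem_inter_iff, Set.mem_setOf_eq, Set.mem_union,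
      Set.mem_prod, Set.mem_Ioc, Set.mem_Iic]
    constructor
    · rintro ⟨hc | hc, hb⟩
      · exact Or.inl ⟨⟨hc.1, hb.1⟩, hc.2, hb.2⟩
      · exact Or.inr ⟨⟨hc.1, hb.1⟩, hc.2, hb.2⟩
    · rintro (⟨⟨h1, h2⟩, h3, h4⟩ | ⟨⟨h1, h2⟩, h3, h4⟩)
      · exact ⟨Or.inl ⟨h1, h3⟩, h2, h4⟩
      · exact ⟨Or.inr ⟨h1, h3⟩, h2, h4⟩
  have hdisj : ∀ z : ℝ×ℝ, Disjoint ((Set.Iic z.1 ∩ Set.Iic z.2) ×ˢ Set.Ioc z.1 z.2)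
      (Set.Ioc z.1 z.2 ×ˢ (Set.Iic z.1 ∩ Set.Iic z.2)) := by
    intro z
    refine Set.disjoint_left.mpr ?_
    rintro ⟨x, y⟩ ⟨⟨hx, -⟩, -⟩ ⟨⟨hx', -⟩, -⟩
    exact absurd hx (not_le.mpr hx')
  simp_rw [hsec]
  have hEq : ∀ z : ℝ×ℝ, (bet.prod bet) (((Set.Iic z.1 ∩ Set.Iic z.2) ×ˢ Set.Ioc z.1 z.2)
        ∪ (Set.Ioc z.1 z.2 ×ˢ (Set.Iic z.1 ∩ Set.Iic z.2)))
      = bet (Set.Iic (min z.1 z.2)) * bet (Set.Ioc z.1 z.2)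
        + bet (Set.Ioc z.1 z.2) * bet (Set.Iic (min z.1 z.2)) := fun z => by
    rw [measure_union (hdisj z)
        (measurableSet_Ioc.prod (measurableSet_Iic.inter measurableSet_Iic)),
      Measure.prod_prod, Measure.prod_prod, Set.Iic_inter_Iic]
  simp_rw [hEq]
  have hcong : (fun z : ℝ×ℝ => bet (Set.Iic (min z.1 z.2)) * bet (Set.Ioc z.1 z.2)
        + bet (Set.Ioc z.1 z.2) * bet (Set.Iic (min z.1 z.2))) =ᵐ[nu.prod nu]
      fun z => ENNReal.ofReal (1-(1-min z.1 z.2)^2) * ENNReal.ofReal ((1-z.1)^2-(1-z.2)^2)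
        + ENNReal.ofReal ((1-z.1)^2-(1-z.2)^2) * ENNReal.ofReal (1-(1-min z.1 z.2)^2) := by
    filter_upwards [ae_mem_pair] with z hz
    rw [bet_Iic ⟨le_min hz.1.1 hz.2.1, min_le_of_left_le hz.1.2⟩, bet_Ioc hz.1 hz.2]
  have hm : Measurable fun z : ℝ×ℝ =>
      ENNReal.ofReal (1-(1-min z.1 z.2)^2) * ENNReal.ofReal ((1-z.1)^2-(1-z.2)^2)
        + ENNReal.ofReal ((1-z.1)^2-(1-z.2)^2) * ENNReal.ofReal (1-(1-min z.1 z.2)^2) := by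
    have hmin : Measurable fun z : ℝ×ℝ => 1-(1-min z.1 z.2)^2 := by fun_prop
    have hD : Measurable fun z : ℝ×ℝ => (1-z.1)^2-(1-z.2)^2 := by fun_prop
    exact (hmin.ennreal_ofReal.mul hD.ennreal_ofReal).add
      (hD.ennreal_ofReal.mul hmin.ennreal_ofReal)
  rw [lintegral_congr_ae hcong, lintegral_prod _ hm.aemeasurable,
    lintegral_congr_ae (g := fun s => ENNReal.ofReal ((4/3)*((1-s)^3-(1-s)^5)))
      (by filter_upwards [ae_mem_nu] with s hs using innerCB hs),
    outer _ (by fun_prop) (fun s hs => by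
      have h1 : (1-s)^5 ≤ (1-s)^3 :=
        pow_le_pow_of_le_one (by linarith [hs.2]) (by linarith [hs.1]) (by norm_num)
      nlinarith)]
  congr 1
  rw [intervalIntegral.integral_const_mul, intervalIntegral.integral_sub
      ((by fun_prop : Continuous fun s:ℝ => (1-s)^3).intervalIntegrable _ _)
      ((by fun_prop : Continuous fun s:ℝ => (1-s)^5).intervalIntegrable _ _),
    intpow, intpow]
  norm_num



lemma ncard_fin2 (P : Fin 2 → Prop) [Decidable (P 0)] [Decidable (P 1)] :
    ({j : Fin 2 | P j} : Set (Fin 2)).ncard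
      = (if P 0 then 1 else 0) + (if P 1 then 1 else 0) := by
  by_cases h0 : P 0 <;> by_cases h1 : P 1
  · have h : {j : Fin 2 | P j} = Set.univ := by
      ext j; fin_cases j <;> simp [h0, h1]
    rw [h]; simp [Set.ncard_univ, h0, h1]
  · have h : {j : Fin 2 | P j} = {0} := by ext j; fin_cases j <;> simp [h0, h1]
    rw [h]; simp [h0, h1]
  · have h : {j : Fin 2 | P j} = {1} := by ext j; fin_cases j <;> simp [h0, h1]
    rw [h]; simp [h0, h1]
  · have h : {j : Fin 2 | P j} = ∅ := by ext j; fin_cases j <;> simp [h0, h1]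
    rw [h]; simp [h0, h1]

lemma event13 {Ω : Type*} (T : Fin 4 → Ω → ℝ) :
    {ω | ranc4 T 0 ω = 1/3} = {ω | T 0 ω < T 2 ω ∧ T 0 ω < T 3 ω} := by
  classical
  ext ω
  simp only [Set.mem_setOf_eq, ranc4]
  rw [ncard_fin2 (fun j => T (Fin.natAdd 2 j) ω ≤ T (Fin.castAdd 2 0) ω)]
  have e2 : Fin.natAdd 2 (0 : Fin 2) = (2 : Fin 4) := rfl
  have e3 : Fin.natAdd 2 (1 : Fin 2) = (3 : Fin 4) := rfl
  have e0 : Fin.castAdd 2 (0 : Fin 2) = (0 : Fin 4) := rfl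
  rw [e2, e3, e0]
  by_cases h2 : T 2 ω ≤ T 0 ω <;> by_cases h3 : T 3 ω ≤ T 0 ω
  · simp only [if_pos h2, if_pos h3]
    push_cast
    constructor
    · intro h; norm_num at h
    · rintro ⟨ha, -⟩; exact absurd h2 (not_le.mpr ha)
  · simp only [if_pos h2, if_neg h3]
    push_cast
    constructor
    · intro h; norm_num at h
    · rintro ⟨ha, -⟩; exact absurd h2 (not_le.mpr ha)
  · simp only [if_neg h2, if_pos h3]
    push_cast
    constructor
    · intro h; norm_num at h
    · rintro ⟨-, hb⟩; exact absurd h3 (not_le.mpr hb)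
  · simp only [if_neg h2, if_neg h3]
    push_cast
    constructor
    · intro _; exact ⟨not_le.mp h2, not_le.mp h3⟩
    · intro _; norm_num

lemma event23 {Ω : Type*} (T : Fin 4 → Ω → ℝ) :
    {ω | ranc4 T 0 ω = 2/3}
      = {ω | (T 2 ω ≤ T 0 ω ∧ T 0 ω < T 3 ω) ∨ (T 0 ω < T 2 ω ∧ T 3 ω ≤ T 0 ω)} := by
  classical
  ext ω
  simp only [Set.mem_setOf_eq, ranc4]
  rw [ncard_fin2 (fun j => T (Fin.natAdd 2 j) ω ≤ T (Fin.castAdd 2 0) ω)]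
  have e2 : Fin.natAdd 2 (0 : Fin 2) = (2 : Fin 4) := rfl
  have e3 : Fin.natAdd 2 (1 : Fin 2) = (3 : Fin 4) := rfl
  have e0 : Fin.castAdd 2 (0 : Fin 2) = (0 : Fin 4) := rfl
  rw [e2, e3, e0]
  by_cases h2 : T 2 ω ≤ T 0 ω <;> by_cases h3 : T 3 ω ≤ T 0 ω
  · simp only [if_pos h2, if_pos h3]
    push_cast
    constructor
    · intro h; norm_num at h
    · rintro (⟨-, hb⟩ | ⟨ha, -⟩)
      · exact absurd h3 (not_le.mpr hb)
      · exact absurd h2 (not_le.mpr ha)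
  · simp only [if_pos h2, if_neg h3]
    push_cast
    constructor
    · intro _; exact Or.inl ⟨h2, not_le.mp h3⟩
    · intro _; norm_num
  · simp only [if_neg h2, if_pos h3]
    push_cast
    constructor
    · intro _; exact Or.inr ⟨not_le.mp h2, h3⟩
    · intro _; norm_num
  · simp only [if_neg h2, if_neg h3]
    push_cast
    constructor
    · intro h; norm_num at h
    · rintro (⟨ha, -⟩ | ⟨-, hb⟩)
      · exact absurd ha h2
      · exact absurd hb h3

lemma event1 {Ω : Type*} (T : Fin 4 → Ω → ℝ) :
    {ω | ranc4 T 1 ω = 1} = {ω | T 2 ω ≤ T 1 ω ∧ T 3 ω ≤ T 1 ω} := by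
  classical
  ext ω
  simp only [Set.mem_setOf_eq, ranc4]
  rw [ncard_fin2 (fun j => T (Fin.natAdd 2 j) ω ≤ T (Fin.castAdd 2 1) ω)]
  have e2 : Fin.natAdd 2 (0 : Fin 2) = (2 : Fin 4) := rfl
  have e3 : Fin.natAdd 2 (1 : Fin 2) = (3 : Fin 4) := rfl
  have e0 : Fin.castAdd 2 (1 : Fin 2) = (1 : Fin 4) := rfl
  rw [e2, e3, e0]
  by_cases h2 : T 2 ω ≤ T 1 ω <;> by_cases h3 : T 3 ω ≤ T 1 ω
  · simp only [if_pos h2, if_pos h3]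
    push_cast
    exact iff_of_true (by norm_num) ⟨h2, h3⟩
  · simp only [if_pos h2, if_neg h3]
    push_cast
    constructor
    · intro h; norm_num at h
    · rintro ⟨-, hb⟩; exact absurd hb h3
  · simp only [if_neg h2, if_pos h3]
    push_cast
    constructor
    · intro h; norm_num at h
    · rintro ⟨ha, -⟩; exact absurd ha h2
  · simp only [if_neg h2, if_neg h3]
    push_cast
    constructor
    · intro h; norm_num at h
    · rintro ⟨ha, -⟩; exact absurd ha h2


end Stmt19Aux
end

/-- with `T 0, T 1` i.i.d. uniform on `[0,1]`, `T 2, T 3` i.i.d. Beta(1,2)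
(density `2(1-x)` on `[0,1]`), all four independent, the RANC p-values satisfy
`P(p_2 = 1 | p_1 = 1/3) = 4/9 > 5/12 = P(p_2 = 1 | p_1 = 2/3)`; so `(p_1, p_2)` is not
positively regression dependent although the nulls stochastically dominate the controls. -/
theorem stmt19 {Ω : Type*} [MeasurableSpace Ω] (μ : Measure Ω) [IsProbabilityMeasure μ]
    (T : Fin 4 → Ω → ℝ) (hmeas : ∀ k, Measurable (T k))
    (hindep : iIndepFun T μ)
    (hunif : ∀ k : Fin 4, (k : ℕ) < 2 →
      Measure.map (T k) μ = volume.restrict (Set.Icc (0 : ℝ) 1))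
    (hbeta : ∀ k : Fin 4, 2 ≤ (k : ℕ) →
      Measure.map (T k) μ =
        (volume.restrict (Set.Icc (0 : ℝ) 1)).withDensity
          (fun x => ENNReal.ofReal (2 * (1 - x)))) :
    μ[|{ω | ranc4 T 0 ω = 1 / 3}] {ω | ranc4 T 1 ω = 1} = 4 / 9 ∧
      μ[|{ω | ranc4 T 0 ω = 2 / 3}] {ω | ranc4 T 1 ω = 1} = 5 / 12 ∧
      μ[|{ω | ranc4 T 0 ω = 2 / 3}] {ω | ranc4 T 1 ω = 1} <
        μ[|{ω | ranc4 T 0 ω = 1 / 3}] {ω | ranc4 T 1 ω = 1} := by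
  open Stmt19Aux in
  have hJmeas : Measurable (fun ω => ((T 0 ω, T 1 ω), (T 2 ω, T 3 ω))) :=
    ((hmeas 0).prodMk (hmeas 1)).prodMk ((hmeas 2).prodMk (hmeas 3))
  set J : Ω → (ℝ × ℝ) × (ℝ × ℝ) := fun ω => ((T 0 ω, T 1 ω), (T 2 ω, T 3 ω)) with hJ
  have hX : μ.map (fun ω => (T 0 ω, T 1 ω)) = Stmt19Aux.nu.prod Stmt19Aux.nu := by
    rw [(indepFun_iff_map_prod_eq_prod_map_map (hmeas 0).aemeasurable
        (hmeas 1).aemeasurable).mp (hindep.indepFun (by decide)),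
      hunif 0 (by decide), hunif 1 (by decide)]
    rfl
  have hY : μ.map (fun ω => (T 2 ω, T 3 ω)) = Stmt19Aux.bet.prod Stmt19Aux.bet := by
    rw [(indepFun_iff_map_prod_eq_prod_map_map (hmeas 2).aemeasurable
        (hmeas 3).aemeasurable).mp (hindep.indepFun (by decide)),
      hbeta 2 (by decide), hbeta 3 (by decide)]
    rfl
  have hXY : IndepFun (fun ω => (T 0 ω, T 1 ω)) (fun ω => (T 2 ω, T 3 ω)) μ :=
    hindep.indepFun_prodMk_prodMk hmeas 0 1 2 3 (by decide) (by decide) (by decide) (by decide)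
  have hmapJ : μ.map J = (Stmt19Aux.nu.prod Stmt19Aux.nu).prod
      (Stmt19Aux.bet.prod Stmt19Aux.bet) := by
    rw [hJ, (indepFun_iff_map_prod_eq_prod_map_map
        ((hmeas 0).prodMk (hmeas 1)).aemeasurable
        ((hmeas 2).prodMk (hmeas 3)).aemeasurable).mp hXY, hX, hY]
  have hprob : ∀ S : Set ((ℝ × ℝ) × (ℝ × ℝ)), MeasurableSet S →
      μ (J ⁻¹' S) = ((Stmt19Aux.nu.prod Stmt19Aux.nu).prod
        (Stmt19Aux.bet.prod Stmt19Aux.bet)) S := fun S hS => by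
    rw [← hmapJ, Measure.map_apply hJmeas hS]
  have hA : {ω | ranc4 T 0 ω = 1 / 3} = J ⁻¹' Stmt19Aux.SA := by
    rw [Stmt19Aux.event13]
    ext ω; simp [Stmt19Aux.SA, hJ]
  have hB : {ω | ranc4 T 1 ω = 1} = J ⁻¹' Stmt19Aux.SB := by
    rw [Stmt19Aux.event1]
    ext ω; simp [Stmt19Aux.SB, hJ]
  have hC : {ω | ranc4 T 0 ω = 2 / 3} = J ⁻¹' Stmt19Aux.SC := by
    rw [Stmt19Aux.event23]
    ext ω; simp [Stmt19Aux.SC, hJ]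
  have hmA : MeasurableSet (J ⁻¹' Stmt19Aux.SA) := hJmeas Stmt19Aux.mSA
  have hmC : MeasurableSet (J ⁻¹' Stmt19Aux.SC) := hJmeas Stmt19Aux.mSC
  have hv1 : μ (J ⁻¹' Stmt19Aux.SA) = ENNReal.ofReal (1/5) := by
    rw [hprob _ Stmt19Aux.mSA, Stmt19Aux.measA]
  have hv2 : μ (J ⁻¹' Stmt19Aux.SA ∩ J ⁻¹' Stmt19Aux.SB) = ENNReal.ofReal (4/45) := by
    rw [← Set.preimage_inter, hprob _ (Stmt19Aux.mSA.inter Stmt19Aux.mSB), Stmt19Aux.measAB]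
  have hv3 : μ (J ⁻¹' Stmt19Aux.SC) = ENNReal.ofReal (4/15) := by
    rw [hprob _ Stmt19Aux.mSC, Stmt19Aux.measC]
  have hv4 : μ (J ⁻¹' Stmt19Aux.SC ∩ J ⁻¹' Stmt19Aux.SB) = ENNReal.ofReal (1/9) := by
    rw [← Set.preimage_inter, hprob _ (Stmt19Aux.mSC.inter Stmt19Aux.mSB), Stmt19Aux.measCB]
  have e1 : μ[|{ω | ranc4 T 0 ω = 1 / 3}] {ω | ranc4 T 1 ω = 1} = 4 / 9 := by
    rw [hA, hB, ProbabilityTheory.cond_apply hmA, hv1, hv2,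
      ← ENNReal.ofReal_inv_of_pos (by norm_num), ← ENNReal.ofReal_mul (by norm_num)]
    norm_num
    rw [ENNReal.ofReal_div_of_pos (by norm_num)]
    norm_num
  have e2 : μ[|{ω | ranc4 T 0 ω = 2 / 3}] {ω | ranc4 T 1 ω = 1} = 5 / 12 := by
    rw [hC, hB, ProbabilityTheory.cond_apply hmC, hv3, hv4,
      ← ENNReal.ofReal_inv_of_pos (by norm_num), ← ENNReal.ofReal_mul (by norm_num)]
    norm_num
    rw [ENNReal.ofReal_div_of_pos (by norm_num)]
    norm_num
  refine ⟨e1, e2, ?_⟩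
  rw [e1, e2]
  rw [show (5 : ℝ≥0∞)/12 = ENNReal.ofReal (5/12) by
      rw [ENNReal.ofReal_div_of_pos (by norm_num)]; norm_num,
    show (4 : ℝ≥0∞)/9 = ENNReal.ofReal (4/9) by
      rw [ENNReal.ofReal_div_of_pos (by norm_num)]; norm_num]
  exact (ENNReal.ofReal_lt_ofReal_iff (by norm_num)).mpr (by norm_num)
end
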